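/- Let A ∈ ℝ^{n×n}, B ∈ ℝ^{n×m}, U0 ∈ ℝ^{m×T}, X0 ∈ ℝ^{n×T}, X1 ∈ ℝ^{n×T} satisfy X1 = A·X0 + B·U0, and suppose the stacked matrix [U0; X0] has full row rank m+n. Suppose further that there exist K ∈ ℝ^{m×n} and a matrix S ∈ ℝ^{n×n} with S ≻ 0 such that S·(A+B·K) + (A+B·K)ᵀ·S ≺ 0. Then there exists Y ∈ ℝ^{T×n} such that X1·Y + (X1·Y)ᵀ ≺ 0 and X0·Y is a symmetric positive definite matrix. -/

import Mathlib

open Matrix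

private lemma posdef_conj_aux {n : ℕ} {M P : Matrix (Fin n) (Fin n) ℝ}
    (hM : M.PosDef) (hP : Function.Injective (Pᵀ.mulVec)) :
    (P * M * Pᵀ).PosDef := by
  refine Matrix.PosDef.of_dotProduct_mulVec_pos ?_ ?_
  · have hMh : Mᵀ = M := hM.1
    show (P * M * Pᵀ)ᴴ = P * M * Pᵀ
    simp only [conjTranspose_eq_transpose_of_trivial, transpose_mul, transpose_transpose, hMh,
      Matrix.mul_assoc]
  · intro x hx
    have hne : Pᵀ *ᵥ x ≠ 0 := by
      intro h
      apply hx
      apply hP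
      simpa using h
    have := hM.dotProduct_mulVec_pos hne
    convert this using 1
    simp only [star_trivial]
    rw [Matrix.mul_assoc, ← Matrix.mulVec_mulVec, ← Matrix.mulVec_mulVec,
      Matrix.dotProduct_mulVec x P, ← Matrix.mulVec_transpose]

theorem stmt_2 (n m T : ℕ)
    (A : Matrix (Fin n) (Fin n) ℝ) (B : Matrix (Fin n) (Fin m) ℝ)
    (U0 : Matrix (Fin m) (Fin T) ℝ) (X0 X1 : Matrix (Fin n) (Fin T) ℝ)
    (hdata : X1 = A * X0 + B * U0)
    (hrank : (Matrix.fromRows U0 X0).rank = m + n)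
    (hstab : ∃ (K : Matrix (Fin m) (Fin n) ℝ) (S : Matrix (Fin n) (Fin n) ℝ),
      S.PosDef ∧ (-(S * (A + B * K) + (A + B * K)ᵀ * S)).PosDef) :
    ∃ Y : Matrix (Fin T) (Fin n) ℝ,
      (-(X1 * Y + (X1 * Y)ᵀ)).PosDef ∧ (X0 * Y).PosDef := by
  obtain ⟨K, S, hS, hLyap⟩ := hstab
  set W : Matrix (Fin m ⊕ Fin n) (Fin T) ℝ := Matrix.fromRows U0 X0 with hW
  -- surjectivity of W.mulVecLin
  have hsurj : Function.Surjective W.mulVecLin := by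
    rw [← LinearMap.range_eq_top]
    apply Submodule.eq_top_of_finrank_eq
    rw [← Matrix.rank, hrank, Module.finrank_pi]
    simp
  set P : Matrix (Fin n) (Fin n) ℝ := S⁻¹ with hP
  have hPpd : P.PosDef := hS.inv
  have hPsymm : Pᵀ = P := hPpd.1
  have hSdet : IsUnit S.det := (Matrix.isUnit_iff_isUnit_det S).mp hS.isUnit
  have hSP : S * P = 1 := Matrix.mul_nonsing_inv S hSdet
  have hPS : P * S = 1 := Matrix.nonsing_inv_mul S hSdet
  -- target matrix
  set C : Matrix (Fin m ⊕ Fin n) (Fin n) ℝ := Matrix.fromRows (K * P) P with hC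
  -- construct Y
  have hv : ∀ i : Fin n, ∃ v : Fin T → ℝ, W *ᵥ v = fun s => C s i := fun i =>
    hsurj (fun s => C s i)
  choose v hvspec using hv
  set Y : Matrix (Fin T) (Fin n) ℝ := Matrix.of (fun t i => v i t) with hY
  have hWY : W * Y = C := by
    ext s i
    have := congrFun (hvspec i) s
    simpa [Matrix.mul_apply, Matrix.mulVec, dotProduct, hY] using this
  rw [Matrix.fromRows_mul] at hWY
  have hU0Y : U0 * Y = K * P := by
    ext i j; exact congrFun (congrFun hWY (Sum.inl i)) j
  have hX0Y : X0 * Y = P := by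
    ext i j; exact congrFun (congrFun hWY (Sum.inr i)) j
  have hX1Y : X1 * Y = (A + B * K) * P := by
    rw [hdata, Matrix.add_mul, Matrix.mul_assoc, Matrix.mul_assoc, hX0Y, hU0Y,
      Matrix.add_mul, Matrix.mul_assoc]
  refine ⟨Y, ?_, ?_⟩
  · have hinj : Function.Injective (Pᵀ.mulVec) := by
      rw [hPsymm]
      intro a b hab
      have := congrArg (S.mulVec) hab
      rwa [Matrix.mulVec_mulVec, Matrix.mulVec_mulVec, hSP, Matrix.one_mulVec,
        Matrix.one_mulVec] at this
    have key : -(X1 * Y + (X1 * Y)ᵀ) =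
        P * (-(S * (A + B * K) + (A + B * K)ᵀ * S)) * Pᵀ := by
      set F := A + B * K with hF
      have h1 : P * (S * F + Fᵀ * S) * P = F * P + P * Fᵀ := by
        rw [Matrix.mul_add, Matrix.add_mul, ← Matrix.mul_assoc P S F, hPS, Matrix.one_mul,
          ← Matrix.mul_assoc P Fᵀ S, Matrix.mul_assoc (P * Fᵀ) S P, hSP, Matrix.mul_one]
      rw [hX1Y, hPsymm, Matrix.mul_neg, Matrix.neg_mul, h1, Matrix.transpose_mul, hPsymm]
    rw [key]
    exact posdef_conj_aux hLyap hinj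
  · rw [hX0Y]; exact hPpd
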